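/- In the transformed Prisoner's Dilemma with w = b/a, if w < min{w_min, w_max} then (D,D) is the unique pure-strategy Nash equilibrium of the subjective game, and if w > max{w_min, w_max} then (C,C) is the unique pure-strategy Nash equilibrium, where w_min = (T−R)/(R−S) and w_max = (P−S)/(T−P). -/
import Mathlib


/-- Pure strategies in the Prisoner's Dilemma. -/
inductive Strategy : Type
  | C : Strategy
  | D : Strategy
deriving DecidableEq

open Strategy

/-- Objective payoff of the row player when she plays `s` against `t`:
`R` at (C,C), `P` at (D,D), `S` for the cooperator and `T` for the defector
at an asymmetric profile. -/
def payoff (T R P S : ℝ) : Strategy → Strategy → ℝ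
  | C, C => R
  | C, D => S
  | D, C => T
  | D, D => P

/-- Subjective utility of a player who plays `s` against `t`:
`u'_i = a·u_i + b·u_j`. -/
def subj (T R P S a b : ℝ) (s t : Strategy) : ℝ :=
  a * payoff T R P S s t + b * payoff T R P S t s

/-- `(s, t)` is a pure-strategy Nash equilibrium of the subjective game:
no player can strictly increase her subjective utility by a unilateral deviation. -/
def IsNash (T R P S a b : ℝ) (s t : Strategy) : Prop :=
  (∀ s' : Strategy, subj T R P S a b s' t ≤ subj T R P S a b s t) ∧
  (∀ t' : Strategy, subj T R P S a b t' s ≤ subj T R P S a b t s)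

/-- with `w = b/a`, if `w < min{w_min, w_max}` then (D,D) is the
unique pure-strategy Nash equilibrium of the subjective game, and if
`w > max{w_min, w_max}` then (C,C) is the unique one, where
`w_min = (T−R)/(R−S)` and `w_max = (P−S)/(T−P)`. -/
theorem unique_nash_outside_band (T R P S a b : ℝ)
    (hTR : T > R) (hRP : R > P) (hPS : P > S)
    (ha : a > 0) (hb : b ≥ 0) :
    (b / a < min ((T - R) / (R - S)) ((P - S) / (T - P)) →
      ∀ s t : Strategy, IsNash T R P S a b s t ↔ (s = Strategy.D ∧ t = Strategy.D)) ∧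
    (b / a > max ((T - R) / (R - S)) ((P - S) / (T - P)) →
      ∀ s t : Strategy, IsNash T R P S a b s t ↔ (s = Strategy.C ∧ t = Strategy.C)) := by

  have hRS : (0:ℝ) < R - S := by linarith
  have hTP : (0:ℝ) < T - P := by linarith
  constructor
  · intro hw s t
    have h1 : b / a < (T - R) / (R - S) := lt_of_lt_of_le hw (min_le_left _ _)
    have h2 : b / a < (P - S) / (T - P) := lt_of_lt_of_le hw (min_le_right _ _)
    rw [div_lt_div_iff₀ ha hRS] at h1
    rw [div_lt_div_iff₀ ha hTP] at h2
    have dom : ∀ t : Strategy, subj T R P S a b C t < subj T R P S a b D t := by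
      intro t; cases t <;> simp [subj, payoff] <;> nlinarith
    constructor
    · intro h
      rcases h with ⟨h₁, h₂⟩
      constructor
      · cases s with
        | D => rfl
        | C => exact absurd (h₁ D) (not_le.mpr (dom t))
      · cases t with
        | D => rfl
        | C => exact absurd (h₂ D) (not_le.mpr (dom s))
    · rintro ⟨rfl, rfl⟩
      constructor <;> intro x <;> cases x <;> simp [subj, payoff] <;> nlinarith
  · intro hw s t
    have h1 : (T - R) / (R - S) < b / a := lt_of_le_of_lt (le_max_left _ _) hw
    have h2 : (P - S) / (T - P) < b / a := lt_of_le_of_lt (le_max_right _ _) hw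
    rw [div_lt_div_iff₀ hRS ha] at h1
    rw [div_lt_div_iff₀ hTP ha] at h2
    have dom : ∀ t : Strategy, subj T R P S a b D t < subj T R P S a b C t := by
      intro t; cases t <;> simp [subj, payoff] <;> nlinarith
    constructor
    · intro h
      rcases h with ⟨h₁, h₂⟩
      constructor
      · cases s with
        | C => rfl
        | D => exact absurd (h₁ C) (not_le.mpr (dom t))
      · cases t with
        | C => rfl
        | D => exact absurd (h₂ C) (not_le.mpr (dom s))
    · rintro ⟨rfl, rfl⟩
      constructor <;> intro x <;> cases x <;> simp [subj, payoff] <;> nlinarith
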